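/- Let M and N be topological spaces, b ∈ M, r ∈ N, f : M → N a function, h₁, h₂ : M → M continuous maps, and φ : M × M × N → M × M × N a continuous map that is homotopic to the identity map of M × M × N and satisfies φ(x, b, r) = (h₁ x, h₂ x, f x) for all x ∈ M. Then h₂ is homotopic to the constant map M → M with value b. -/

import Mathlib

/-- Key lemma: if `φ` is a continuous self-map of `M × M × N` homotopic to the identity
with `φ (x, b, r) = (h₁ x, h₂ x, f x)` for all `x`, then `h₂` is homotopic to the
constant map with value `b`. -/
theorem cloning_factor_homotopic_const
    {M N : Type*} [TopologicalSpace M] [TopologicalSpace N]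
    (b : M) (r : N) (f : M → N)
    (h₁ h₂ : C(M, M))
    (φ : C(M × M × N, M × M × N))
    (hφ : φ.Homotopic (ContinuousMap.id (M × M × N)))
    (hclone : ∀ x : M, φ (x, b, r) = (h₁ x, h₂ x, f x)) :
    h₂.Homotopic (ContinuousMap.const M b) := by
  let incl : C(M, M × M × N) :=
    ⟨fun x => (x, b, r), by fun_prop⟩
  let proj : C(M × M × N, M) :=
    ContinuousMap.fst.comp ContinuousMap.snd
  have key : (proj.comp (φ.comp incl)).Homotopic
      (proj.comp ((ContinuousMap.id (M × M × N)).comp incl)) :=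
    (ContinuousMap.Homotopic.refl proj).comp
      (hφ.comp (ContinuousMap.Homotopic.refl incl))
  have e1 : proj.comp (φ.comp incl) = h₂ := by
    ext x; simp [proj, incl, hclone x]
  have e2 : proj.comp ((ContinuousMap.id (M × M × N)).comp incl)
      = ContinuousMap.const M b := by
    ext x; simp [proj, incl]
  rwa [e1, e2] at key
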